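/- Let D and N be positive integers with N ≥ D and N ≥ 2, and let φ_1,…,φ_N be nonzero vectors in ℂ^D. Then max over all pairs n ≠ n' of |⟨φ_n, φ_{n'}⟩| / (‖φ_n‖·‖φ_{n'}‖) is at least sqrt((N−D)/(D(N−1))). -/

import Mathlib

open Finset in
private theorem welch_sum_swap4 {α β γ δ M : Type*} [Fintype α] [Fintype β] [Fintype γ]
    [Fintype δ] [AddCommMonoid M] (f : α → β → γ → δ → M) :
    ∑ a, ∑ b, ∑ c, ∑ d, f a b c d = ∑ c, ∑ d, ∑ a, ∑ b, f a b c d :=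
  calc ∑ a, ∑ b, ∑ c, ∑ d, f a b c d
      = ∑ a, ∑ c, ∑ b, ∑ d, f a b c d :=
        Finset.sum_congr rfl fun _ _ => Finset.sum_comm
    _ = ∑ c, ∑ a, ∑ b, ∑ d, f a b c d := Finset.sum_comm
    _ = ∑ c, ∑ a, ∑ d, ∑ b, f a b c d :=
        Finset.sum_congr rfl fun _ _ => Finset.sum_congr rfl fun _ _ => Finset.sum_comm
    _ = ∑ c, ∑ d, ∑ a, ∑ b, f a b c d :=
        Finset.sum_congr rfl fun _ _ => Finset.sum_comm

private theorem welch_quad (D N : ℕ) (ψ : Fin N → EuclideanSpace ℂ (Fin D)) :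
    ∑ i, ∑ j, ((∑ n, ψ n i * (starRingEnd ℂ) (ψ n j)) *
        (starRingEnd ℂ) (∑ n, ψ n i * (starRingEnd ℂ) (ψ n j))) =
    ∑ n, ∑ m, ((inner ℂ (ψ n) (ψ m) : ℂ) * (starRingEnd ℂ) (inner ℂ (ψ n) (ψ m) : ℂ)) := by
  simp only [PiLp.inner_apply, RCLike.inner_apply, map_sum, map_mul, RingHomCompTriple.comp_apply,
    RCLike.conj_conj, Finset.sum_mul_sum]
  rw [welch_sum_swap4 (fun i j n m => _)]
  refine Finset.sum_congr rfl fun n _ => Finset.sum_congr rfl fun m _ => ?_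
  rw [Finset.sum_comm]
  refine Finset.sum_congr rfl fun i _ => Finset.sum_congr rfl fun j _ => ?_
  simp only [RingHom.id_apply]; ring

/-- **Welch bound.** Any `N` nonzero vectors in `ℂ^D` (with `N ≥ D`, `N ≥ 2`) have a pair
whose normalized inner product modulus is at least `sqrt((N-D)/(D(N-1)))`. -/
theorem welch_bound (D N : ℕ) (hD : 0 < D) (hN : 2 ≤ N) (hDN : D ≤ N)
    (φ : Fin N → EuclideanSpace ℂ (Fin D)) (hφ : ∀ n, φ n ≠ 0) :
    ∃ n n' : Fin N, n ≠ n' ∧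
      Real.sqrt (((N : ℝ) - D) / (D * ((N : ℝ) - 1))) ≤
        ‖(inner ℂ (φ n) (φ n') : ℂ)‖ / (‖φ n‖ * ‖φ n'‖) := by
  classical
  -- normalized vectors
  set ψ : Fin N → EuclideanSpace ℂ (Fin D) :=
    fun n => ((‖φ n‖ : ℂ))⁻¹ • φ n with hψdef
  have hφn : ∀ n, ‖φ n‖ ≠ 0 := fun n => norm_ne_zero_iff.mpr (hφ n)
  have hnorm : ∀ n, ‖ψ n‖ = 1 := by
    intro n
    rw [hψdef]
    simp only [norm_smul, norm_inv, Complex.norm_real, Real.norm_eq_abs,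
      abs_of_nonneg (norm_nonneg (φ n))]
    exact inv_mul_cancel₀ (hφn n)
  have hinner : ∀ n m, ‖(inner ℂ (ψ n) (ψ m) : ℂ)‖
      = ‖(inner ℂ (φ n) (φ m) : ℂ)‖ / (‖φ n‖ * ‖φ m‖) := by
    intro n m
    rw [hψdef]
    simp only [inner_smul_left, inner_smul_right, norm_mul, map_inv₀,
      RCLike.norm_conj, Complex.norm_real, Real.norm_eq_abs, norm_inv,
      abs_of_nonneg (norm_nonneg _)]
    field_simp
  set a : Fin N → Fin N → ℝ := fun n m => ‖(inner ℂ (ψ n) (ψ m) : ℂ)‖ with hadef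
  have ha0 : ∀ n m, 0 ≤ a n m := fun n m => norm_nonneg _
  have hadiag : ∀ n, a n n = 1 := by
    intro n
    rw [hadef]
    simp only [inner_self_eq_norm_sq_to_K, hnorm]
    norm_num
  set S : ℝ := ∑ n, ∑ m, a n m ^ 2 with hSdef
  -- the frame operator
  set T : Fin D → Fin D → ℂ := fun i j => ∑ n, ψ n i * (starRingEnd ℂ) (ψ n j) with hTdef
  set t : Fin D → ℝ := fun i => ∑ n, ‖ψ n i‖ ^ 2 with htdef
  have h4c := welch_quad D N ψ
  have h4 : ∑ i, ∑ j, ‖T i j‖ ^ 2 = S := by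
    have h5 : ∑ i, ∑ j, Complex.normSq (T i j)
        = ∑ n, ∑ m, Complex.normSq (inner ℂ (ψ n) (ψ m) : ℂ) := by
      simp only [Complex.mul_conj] at h4c
      exact_mod_cast h4c
    rw [hSdef]
    simp only [hadef, ← Complex.sq_norm] at h5 ⊢
    exact h5
  have hTdiag : ∀ i, T i i = ((t i : ℝ) : ℂ) := by
    intro i
    rw [hTdef, htdef]
    simp only [Complex.mul_conj, ← Complex.sq_norm]
    push_cast
    rfl
  have htN : ∑ i, t i = (N : ℝ) := by
    rw [htdef, Finset.sum_comm]
    have : ∀ n : Fin N, ∑ i, ‖ψ n i‖ ^ 2 = 1 := by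
      intro n
      have h := hnorm n
      rw [EuclideanSpace.norm_eq] at h
      exact Real.sqrt_eq_one.mp h
    rw [Finset.sum_congr rfl fun n _ => this n]
    simp
  have ht0 : ∀ i, 0 ≤ t i := by
    intro i
    exact Finset.sum_nonneg fun n _ => sq_nonneg _
  -- key inequality : N^2 ≤ D * S
  have key : (N : ℝ) ^ 2 ≤ (D : ℝ) * S := by
    have h1 : (∑ i, t i) ^ 2 ≤ (D : ℝ) * ∑ i, t i ^ 2 := by
      have := sq_sum_le_card_mul_sum_sq (s := (Finset.univ : Finset (Fin D))) (f := t)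
      simpa using this
    have h2 : ∑ i, t i ^ 2 ≤ ∑ i, ∑ j, ‖T i j‖ ^ 2 := by
      apply Finset.sum_le_sum
      intro i _
      have : t i ^ 2 = ‖T i i‖ ^ 2 := by
        rw [hTdiag i]
        simp [abs_of_nonneg (ht0 i)]
      rw [this]
      exact Finset.single_le_sum (f := fun j => ‖T i j‖ ^ 2)
        (fun j _ => sq_nonneg _) (Finset.mem_univ i)
    calc (N : ℝ) ^ 2 = (∑ i, t i) ^ 2 := by rw [htN]
      _ ≤ (D : ℝ) * ∑ i, t i ^ 2 := h1
      _ ≤ (D : ℝ) * ∑ i, ∑ j, ‖T i j‖ ^ 2 :=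
          mul_le_mul_of_nonneg_left h2 (Nat.cast_nonneg D)
      _ = (D : ℝ) * S := by rw [h4]
  -- take the maximizing off-diagonal pair
  set s : Finset (Fin N × Fin N) := Finset.univ.filter (fun p => p.1 ≠ p.2) with hsdef
  have hs : s.Nonempty := by
    refine ⟨(⟨0, by omega⟩, ⟨1, by omega⟩), ?_⟩
    simp [hsdef]
  obtain ⟨p, hp, hpmax⟩ := s.exists_max_image (fun p => a p.1 p.2) hs
  have hpne : p.1 ≠ p.2 := by
    rw [hsdef] at hp
    simpa using hp
  set M : ℝ := a p.1 p.2 with hM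
  have hM0 : 0 ≤ M := ha0 _ _
  -- bound S from above
  have hSup : S ≤ (N : ℝ) + (N : ℝ) * ((N : ℝ) - 1) * M ^ 2 := by
    have hsplit : ∀ n : Fin N, ∑ m, a n m ^ 2
        = 1 + ∑ m ∈ Finset.univ.erase n, a n m ^ 2 := by
      intro n
      rw [← Finset.add_sum_erase _ _ (Finset.mem_univ n), hadiag n, one_pow]
    have hbound : ∀ n : Fin N, ∑ m ∈ Finset.univ.erase n, a n m ^ 2
        ≤ ((N : ℝ) - 1) * M ^ 2 := by
      intro n
      have : ∑ m ∈ Finset.univ.erase n, a n m ^ 2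
          ≤ ∑ _m ∈ Finset.univ.erase n, M ^ 2 := by
        apply Finset.sum_le_sum
        intro m hm
        have hmn : n ≠ m := fun h => (Finset.mem_erase.mp hm).1 h.symm
        have := hpmax (n, m) (by simp [hsdef, hmn])
        exact pow_le_pow_left₀ (ha0 n m) this 2
      refine this.trans ?_
      rw [Finset.sum_const, Finset.card_erase_of_mem (Finset.mem_univ n),
        Finset.card_univ, Fintype.card_fin, nsmul_eq_mul]
      have : ((N - 1 : ℕ) : ℝ) = (N : ℝ) - 1 := by
        have : 1 ≤ N := by omega
        push_cast [Nat.cast_sub this]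
        ring
      rw [this]
    calc S = ∑ n, (1 + ∑ m ∈ Finset.univ.erase n, a n m ^ 2) := by
          rw [hSdef]; exact Finset.sum_congr rfl fun n _ => hsplit n
      _ ≤ ∑ _n : Fin N, (1 + ((N : ℝ) - 1) * M ^ 2) :=
          Finset.sum_le_sum fun n _ => by linarith [hbound n]
      _ = (N : ℝ) + (N : ℝ) * ((N : ℝ) - 1) * M ^ 2 := by
          rw [Finset.sum_const, Finset.card_univ, Fintype.card_fin, nsmul_eq_mul]
          ring
  -- conclude
  have hDpos : (0 : ℝ) < D := by exact_mod_cast hD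
  have hN1 : (1 : ℝ) < N := by
    have : (2 : ℝ) ≤ N := by exact_mod_cast hN
    linarith
  have hDN' : (D : ℝ) ≤ N := by exact_mod_cast hDN
  have hfinal : ((N : ℝ) - D) / ((D : ℝ) * ((N : ℝ) - 1)) ≤ M ^ 2 := by
    rw [div_le_iff₀ (by nlinarith)]
    have hcomb : (N : ℝ) ^ 2 ≤ (D : ℝ) * ((N : ℝ) + (N : ℝ) * ((N : ℝ) - 1) * M ^ 2) :=
      key.trans (mul_le_mul_of_nonneg_left hSup (Nat.cast_nonneg D))
    nlinarith [hcomb, hN1, hDpos]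
  refine ⟨p.1, p.2, hpne, ?_⟩
  rw [← hinner p.1 p.2]
  calc Real.sqrt (((N : ℝ) - D) / (D * ((N : ℝ) - 1)))
      ≤ Real.sqrt (M ^ 2) := Real.sqrt_le_sqrt hfinal
    _ = M := Real.sqrt_sq hM0
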